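/- For a quaternion matrix Q ∈ ℍ^{N₁×N₂}, the number of strictly positive diagonal entries of Λ is the same for every QSVD Q = U Λ Vᴴ, and this common number r satisfies 2r = rank(f(Q)), the rank of the isomorphic complex representation f(Q) ∈ ℂ^{2N₁×2N₂}. -/

import Mathlib

open Matrix

noncomputable section

/-- The two complex components of the Cayley–Dickson form of a quaternion. -/
def qC1 (q : Quaternion ℝ) : ℂ := ⟨q.re, q.imI⟩
def qC2 (q : Quaternion ℝ) : ℂ := ⟨q.imJ, q.imK⟩

/-- The isomorphic complex representation `f` of a quaternion matrix:
`f(Q) = [[Z₁, Z₂], [−Z₂*, Z₁*]]` with `Z₁ = Q₀ + Q₁ i`, `Z₂ = Q₂ + Q₃ i`. -/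
def qf {N₁ N₂ : ℕ} (Q : Matrix (Fin N₁) (Fin N₂) (Quaternion ℝ)) :
    Matrix (Fin N₁ ⊕ Fin N₁) (Fin N₂ ⊕ Fin N₂) ℂ :=
  Matrix.fromBlocks (Matrix.of fun m n => qC1 (Q m n)) (Matrix.of fun m n => qC2 (Q m n))
    (Matrix.of fun m n => -star (qC2 (Q m n))) (Matrix.of fun m n => star (qC1 (Q m n)))

/-- A square quaternion matrix is unitary if `U Uᴴ = Uᴴ U = I`. -/
def qUnitary {N : ℕ} (U : Matrix (Fin N) (Fin N) (Quaternion ℝ)) : Prop :=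
  U * Uᴴ = 1 ∧ Uᴴ * U = 1

/-- A rectangular real matrix is "rectangular diagonal with nonnegative diagonal entries". -/
def recDiagNonneg {N₁ N₂ : ℕ} (Λ : Matrix (Fin N₁) (Fin N₂) ℝ) : Prop :=
  (∀ (m : Fin N₁) (n : Fin N₂), (m : ℕ) ≠ (n : ℕ) → Λ m n = 0) ∧ ∀ m n, 0 ≤ Λ m n

/-- View a real matrix as a quaternion matrix. -/
def rToQ {N₁ N₂ : ℕ} (Λ : Matrix (Fin N₁) (Fin N₂) ℝ) :
    Matrix (Fin N₁) (Fin N₂) (Quaternion ℝ) :=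
  Λ.map (algebraMap ℝ (Quaternion ℝ))

/-- `IsQSVD Q U Λ V` : `Q = U Λ Vᴴ` is a quaternion singular value decomposition. -/
def IsQSVD {N₁ N₂ : ℕ} (Q : Matrix (Fin N₁) (Fin N₂) (Quaternion ℝ))
    (U : Matrix (Fin N₁) (Fin N₁) (Quaternion ℝ))
    (Λ : Matrix (Fin N₁) (Fin N₂) ℝ)
    (V : Matrix (Fin N₂) (Fin N₂) (Quaternion ℝ)) : Prop :=
  qUnitary U ∧ qUnitary V ∧ recDiagNonneg Λ ∧ Q = U * rToQ Λ * Vᴴ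

/-- The quaternion nuclear norm: `½ Σ_j sqrt(λ_j)`, `λ_j` the eigenvalues of `f(X)ᴴ f(X)`. -/
noncomputable def qNuclearNorm {N₁ N₂ : ℕ}
    (X : Matrix (Fin N₁) (Fin N₂) (Quaternion ℝ)) : ℝ :=
  (1 / 2) * ∑ j, Real.sqrt ((Matrix.isHermitian_conjTranspose_mul_self (qf X)).eigenvalues j)

/-- The quaternion Frobenius norm. -/
noncomputable def qFrob {M N : ℕ} (X : Matrix (Fin M) (Fin N) (Quaternion ℝ)) : ℝ :=
  Real.sqrt (∑ m, ∑ n, ‖X m n‖ ^ 2)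

/-- The spectral norm of a quaternion matrix: the square root of the largest eigenvalue
of `f(E)ᴴ f(E)`. -/
noncomputable def qSpectralNorm {N₁ N₂ : ℕ}
    (E : Matrix (Fin N₁) (Fin N₂) (Quaternion ℝ)) : ℝ :=
  ⨆ j, Real.sqrt ((Matrix.isHermitian_conjTranspose_mul_self (qf E)).eigenvalues j)

section Aux

lemma qC1_zero : qC1 0 = 0 := by apply Complex.ext <;> simp [qC1, Quaternion.re_zero, Quaternion.imI_zero]

lemma qC2_zero : qC2 0 = 0 := by apply Complex.ext <;> simp [qC2, Quaternion.imJ_zero, Quaternion.imK_zero]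

lemma qC1_one : qC1 1 = 1 := by apply Complex.ext <;> simp [qC1, Quaternion.re_one, Quaternion.imI_one]

lemma qC2_one : qC2 1 = 0 := by apply Complex.ext <;> simp [qC2, Quaternion.imJ_one, Quaternion.imK_one]

lemma qC1_add (a b : Quaternion ℝ) : qC1 (a + b) = qC1 a + qC1 b := by
  apply Complex.ext <;> simp [qC1]

lemma qC2_add (a b : Quaternion ℝ) : qC2 (a + b) = qC2 a + qC2 b := by
  apply Complex.ext <;> simp [qC2]

/-- `qC1` bundled as an additive monoid hom. -/
def qC1Hom : Quaternion ℝ →+ ℂ where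
  toFun := qC1
  map_zero' := qC1_zero
  map_add' := qC1_add

/-- `qC2` bundled as an additive monoid hom. -/
def qC2Hom : Quaternion ℝ →+ ℂ where
  toFun := qC2
  map_zero' := qC2_zero
  map_add' := qC2_add

lemma qC1_sum {ι : Type*} (s : Finset ι) (f : ι → Quaternion ℝ) :
    qC1 (∑ i ∈ s, f i) = ∑ i ∈ s, qC1 (f i) :=
  map_sum qC1Hom f s

lemma qC2_sum {ι : Type*} (s : Finset ι) (f : ι → Quaternion ℝ) :
    qC2 (∑ i ∈ s, f i) = ∑ i ∈ s, qC2 (f i) :=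
  map_sum qC2Hom f s

lemma qC1_mul (a b : Quaternion ℝ) :
    qC1 (a * b) = qC1 a * qC1 b - qC2 a * star (qC2 b) := by
  apply Complex.ext <;>
    simp [qC1, qC2, Quaternion.re_mul, Quaternion.imI_mul, Complex.mul_re, Complex.mul_im] <;>
    ring

lemma qC2_mul (a b : Quaternion ℝ) :
    qC2 (a * b) = qC1 a * qC2 b + qC2 a * star (qC1 b) := by
  apply Complex.ext <;>
    simp [qC1, qC2, Quaternion.imJ_mul, Quaternion.imK_mul, Complex.mul_re, Complex.mul_im] <;>
    ring

lemma qC1_star (a : Quaternion ℝ) : qC1 (star a) = star (qC1 a) := by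
  apply Complex.ext <;> simp [qC1]

lemma qC2_star (a : Quaternion ℝ) : qC2 (star a) = - qC2 a := by
  apply Complex.ext <;> simp [qC2]

lemma qf_mul {N₁ N₂ N₃ : ℕ} (A : Matrix (Fin N₁) (Fin N₂) (Quaternion ℝ))
    (B : Matrix (Fin N₂) (Fin N₃) (Quaternion ℝ)) :
    qf (A * B) = qf A * qf B := by
  ext i j
  cases i with
  | inl m =>
    cases j with
    | inl n =>
      simp only [qf, Matrix.mul_apply, Matrix.fromBlocks_apply₁₁, Matrix.of_apply,
        Fintype.sum_sum_type, Matrix.fromBlocks_apply₁₂, Matrix.fromBlocks_apply₂₁]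
      rw [qC1_sum, ← Finset.sum_add_distrib]
      refine Finset.sum_congr rfl fun k _ => ?_
      rw [qC1_mul]; ring
    | inr n =>
      simp only [qf, Matrix.mul_apply, Matrix.fromBlocks_apply₁₂, Matrix.of_apply,
        Fintype.sum_sum_type, Matrix.fromBlocks_apply₁₁, Matrix.fromBlocks_apply₂₂]
      rw [qC2_sum, ← Finset.sum_add_distrib]
      exact Finset.sum_congr rfl fun k _ => qC2_mul _ _
  | inr m =>
    cases j with
    | inl n =>
      simp only [qf, Matrix.mul_apply, Matrix.fromBlocks_apply₂₁, Matrix.of_apply,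
        Fintype.sum_sum_type, Matrix.fromBlocks_apply₁₁, Matrix.fromBlocks_apply₂₂]
      rw [qC2_sum, star_sum, ← Finset.sum_neg_distrib, ← Finset.sum_add_distrib]
      refine Finset.sum_congr rfl fun k _ => ?_
      simp only [qC2_mul, star_add, star_mul', star_star]
      ring
    | inr n =>
      simp only [qf, Matrix.mul_apply, Matrix.fromBlocks_apply₂₂, Matrix.of_apply,
        Fintype.sum_sum_type, Matrix.fromBlocks_apply₁₂, Matrix.fromBlocks_apply₂₁]
      rw [qC1_sum, star_sum, ← Finset.sum_add_distrib]
      refine Finset.sum_congr rfl fun k _ => ?_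
      simp only [qC1_mul, star_sub, star_mul', star_star]
      ring

lemma qf_one {N : ℕ} : qf (1 : Matrix (Fin N) (Fin N) (Quaternion ℝ)) = 1 := by
  ext i j
  cases i with
  | inl m =>
    cases j with
    | inl n =>
      by_cases hmn : m = n <;>
        simp [qf, Matrix.one_apply, hmn, qC1_one, qC1_zero]
    | inr n => simp [qf, Matrix.one_apply, apply_ite qC2, qC2_one, qC2_zero]
  | inr m =>
    cases j with
    | inl n => simp [qf, Matrix.one_apply, apply_ite qC2, qC2_one, qC2_zero]
    | inr n =>
      by_cases hmn : m = n <;>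
        simp [qf, Matrix.one_apply, hmn, qC1_one, qC1_zero]

lemma qf_conjTranspose {N₁ N₂ : ℕ} (A : Matrix (Fin N₁) (Fin N₂) (Quaternion ℝ)) :
    qf Aᴴ = (qf A)ᴴ := by
  ext i j
  cases i with
  | inl m =>
    cases j with
    | inl n => simp [qf, Matrix.conjTranspose_apply, qC1_star]
    | inr n => simp [qf, Matrix.conjTranspose_apply, qC2_star]
  | inr m =>
    cases j with
    | inl n => simp [qf, Matrix.conjTranspose_apply, qC2_star]
    | inr n => simp [qf, Matrix.conjTranspose_apply, qC1_star]

lemma isUnit_det_qf_of_unitary {N : ℕ} {U : Matrix (Fin N) (Fin N) (Quaternion ℝ)}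
    (hU : qUnitary U) : IsUnit (qf U).det := by
  apply Matrix.isUnit_det_of_right_inverse (B := (qf U)ᴴ)
  rw [← qf_conjTranspose, ← qf_mul, hU.1, qf_one]

lemma qf_rToQ {N₁ N₂ : ℕ} (Λ : Matrix (Fin N₁) (Fin N₂) ℝ) :
    qf (rToQ Λ) = Matrix.fromBlocks (Λ.map (fun x => (x : ℂ))) 0 0 (Λ.map (fun x => (x : ℂ))) := by
  ext i j
  cases i with
  | inl m =>
    cases j with
    | inl n =>
      apply Complex.ext <;>
        simp [qf, rToQ, qC1, Quaternion.algebraMap_def, Quaternion.re_coe, Quaternion.imI_coe]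
    | inr n =>
      apply Complex.ext <;>
        simp [qf, rToQ, qC2, Quaternion.algebraMap_def, Quaternion.imJ_coe, Quaternion.imK_coe]
  | inr m =>
    cases j with
    | inl n =>
      apply Complex.ext <;>
        simp [qf, rToQ, qC2, Quaternion.algebraMap_def, Quaternion.imJ_coe, Quaternion.imK_coe]
    | inr n =>
      apply Complex.ext <;>
        simp [qf, rToQ, qC1, Quaternion.algebraMap_def, Quaternion.re_coe, Quaternion.imI_coe]

open ComplexOrder in
lemma rank_qf_rToQ {N₁ N₂ : ℕ} (Λ : Matrix (Fin N₁) (Fin N₂) ℝ) (hΛ : recDiagNonneg Λ) :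
    (qf (rToQ Λ)).rank =
      2 * (Finset.univ.filter fun p : Fin N₁ × Fin N₂ =>
          (p.1 : ℕ) = (p.2 : ℕ) ∧ 0 < Λ p.1 p.2).card := by
  classical
  set D : Matrix (Fin N₁) (Fin N₂) ℂ := Λ.map (fun x => (x : ℂ)) with hD
  set w : Fin N₂ → ℂ := fun n => ((∑ m, (Λ m n) ^ 2 : ℝ) : ℂ) with hw
  have hDD : Dᴴ * D = Matrix.diagonal w := by
    ext n n'
    by_cases hnn : n = n'
    · subst hnn
      simp only [Matrix.mul_apply, Matrix.diagonal_apply_eq, Matrix.conjTranspose_apply, hD,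
        Matrix.map_apply, Complex.star_def, Complex.conj_ofReal, hw, Complex.ofReal_sum]
      apply Finset.sum_congr rfl
      intro m _
      push_cast
      ring
    · rw [Matrix.diagonal_apply_ne _ hnn]
      simp only [Matrix.mul_apply, Matrix.conjTranspose_apply, hD, Matrix.map_apply,
        Complex.star_def, Complex.conj_ofReal]
      apply Finset.sum_eq_zero
      intro m _
      rcases eq_or_ne ((m : ℕ)) ((n : ℕ)) with hm | hm
      · have : ((m : ℕ)) ≠ ((n' : ℕ)) := by
          rw [hm]; exact fun hc => hnn (Fin.ext hc)
        rw [hΛ.1 m n' this]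
        simp
      · rw [hΛ.1 m n hm]
        simp
    
  have hrank : (qf (rToQ Λ)).rank = (Matrix.diagonal (Sum.elim w w)).rank := by
    rw [← Matrix.rank_conjTranspose_mul_self, qf_rToQ,
      Matrix.fromBlocks_conjTranspose, Matrix.fromBlocks_multiply]
    simp only [Matrix.conjTranspose_zero, Matrix.mul_zero, Matrix.zero_mul,
      add_zero, zero_add, ← hD, hDD, Matrix.fromBlocks_diagonal]
  rw [hrank, Matrix.rank_diagonal]
  rw [Fintype.card_congr (Equiv.subtypeSum
    (p := fun i : Fin N₂ ⊕ Fin N₂ => Sum.elim w w i ≠ 0)), Fintype.card_sum]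
  simp only [Sum.elim_inl, Sum.elim_inr]
  have hcard : Fintype.card {n : Fin N₂ // w n ≠ 0} =
      (Finset.univ.filter fun p : Fin N₁ × Fin N₂ =>
          (p.1 : ℕ) = (p.2 : ℕ) ∧ 0 < Λ p.1 p.2).card := by
    rw [Fintype.card_subtype]
    refine (Finset.card_bij (fun p _ => p.2) ?_ ?_ ?_).symm
    · rintro ⟨m, n⟩ hp
      simp only [Finset.mem_filter, Finset.mem_univ, true_and] at hp ⊢
      have hpos : 0 < ∑ m', (Λ m' n) ^ 2 := by
        apply Finset.sum_pos' (fun i _ => sq_nonneg _)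
        exact ⟨m, Finset.mem_univ m, pow_pos hp.2 2⟩
      simp only [hw, ne_eq, Complex.ofReal_eq_zero]
      exact ne_of_gt hpos
    · rintro ⟨m, n⟩ hp ⟨m', n'⟩ hp' hnn
      simp only [Finset.mem_filter, Finset.mem_univ, true_and] at hp hp'
      simp only at hnn
      subst hnn
      have : m = m' := Fin.ext (hp.1.trans hp'.1.symm)
      simp [this]
    · intro n hn
      simp only [Finset.mem_filter, Finset.mem_univ, true_and, hw, ne_eq,
        Complex.ofReal_eq_zero] at hn
      have : ∃ m, Λ m n ≠ 0 := by
        by_contra hc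
        push_neg at hc
        exact hn (Finset.sum_eq_zero fun m _ => by rw [hc m]; ring)
      obtain ⟨m, hm⟩ := this
      have hval : (m : ℕ) = (n : ℕ) := by
        by_contra hc
        exact hm (hΛ.1 m n hc)
      exact ⟨(m, n), Finset.mem_filter.2 ⟨Finset.mem_univ _,
        hval, lt_of_le_of_ne (hΛ.2 m n) (Ne.symm hm)⟩, rfl⟩
  rw [two_mul, ← hcard]
  congr 1 <;> exact Fintype.card_congr' rfl

lemma rank_qf_of_qsvd {N₁ N₂ : ℕ} {Q : Matrix (Fin N₁) (Fin N₂) (Quaternion ℝ)}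
    {U : Matrix (Fin N₁) (Fin N₁) (Quaternion ℝ)}
    {Λ : Matrix (Fin N₁) (Fin N₂) ℝ}
    {V : Matrix (Fin N₂) (Fin N₂) (Quaternion ℝ)}
    (h : IsQSVD Q U Λ V) :
    (qf Q).rank =
      2 * (Finset.univ.filter fun p : Fin N₁ × Fin N₂ =>
          (p.1 : ℕ) = (p.2 : ℕ) ∧ 0 < Λ p.1 p.2).card := by
  obtain ⟨hU, hV, hΛ, hQ⟩ := h
  have hVH : qUnitary Vᴴ := by
    constructor
    · rw [Matrix.conjTranspose_conjTranspose]; exact hV.2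
    · rw [Matrix.conjTranspose_conjTranspose]; exact hV.1
  rw [hQ, qf_mul, qf_mul,
    Matrix.rank_mul_eq_left_of_isUnit_det (qf Vᴴ) _ (isUnit_det_qf_of_unitary hVH),
    Matrix.rank_mul_eq_right_of_isUnit_det (qf U) _ (isUnit_det_qf_of_unitary hU),
    rank_qf_rToQ Λ hΛ]

end Aux

/-- the number of strictly positive diagonal entries of `Λ` is the same for
every QSVD of `Q`, and twice this number equals the rank of `f(Q)`. -/
theorem qsvd_rank {N₁ N₂ : ℕ} (Q : Matrix (Fin N₁) (Fin N₂) (Quaternion ℝ))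
    (U U' : Matrix (Fin N₁) (Fin N₁) (Quaternion ℝ))
    (Λ Λ' : Matrix (Fin N₁) (Fin N₂) ℝ)
    (V V' : Matrix (Fin N₂) (Fin N₂) (Quaternion ℝ))
    (h : IsQSVD Q U Λ V) (h' : IsQSVD Q U' Λ' V') :
    (Finset.univ.filter fun p : Fin N₁ × Fin N₂ =>
        (p.1 : ℕ) = (p.2 : ℕ) ∧ 0 < Λ p.1 p.2).card =
      (Finset.univ.filter fun p : Fin N₁ × Fin N₂ =>
        (p.1 : ℕ) = (p.2 : ℕ) ∧ 0 < Λ' p.1 p.2).card ∧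
    2 * (Finset.univ.filter fun p : Fin N₁ × Fin N₂ =>
        (p.1 : ℕ) = (p.2 : ℕ) ∧ 0 < Λ p.1 p.2).card = (qf Q).rank := by
  have h1 := rank_qf_of_qsvd h
  have h2 := rank_qf_of_qsvd h'
  constructor
  · omega
  · omega
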